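/- Let L : X × Y → R be differentiable in a Banach space setting where the k-th feature map I_k^{Z} depends on parameters Z and satisfies the first-order expansion I_k^{Z+E} = I_k^{Z} + ΔI_k^{Z,E} + o(‖E‖) with ⟨ΔI_j^{Z,E}, U⟩ = ⟨ε_j, g_j(U)⟩ + ⟨ΔI_{j-1}^{Z,E}, h_j(U)⟩ for linear maps g_j, h_j and ΔI_0 = 0. Then the gradient of Z_j ↦ L(y, ⟨W, I_k^Z⟩) is L'(y, ⟨W, I_k^Z⟩)·g_j(h_{j+1}(⋯h_k(W))). -/

import Mathlib

open RealInnerProductSpace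

/-- Perturbation view of backpropagation. Parameters `Z = (Z_1, ..., Z_k)` live in inner
product spaces `P j` (Frobenius inner product on matrices), and the feature maps `I_j^Z`
live in inner product spaces `F j`, for `j = 0, ..., k` (indices in `Fin (k+1)`).
Assume the first-order expansion `I_j^{Z+E} = I_j^Z + ΔI_j^{Z,E} + o(‖E‖)` holds, where
`ΔI_0 = 0` and `⟪ΔI_j, U⟫ = ⟪ε_j, g_j U⟫ + ⟪ΔI_{j-1}, h_j U⟫` for linear maps `g_j, h_j`.
Then the gradient of `Z_j ↦ L(⟪W, I_k^Z⟫)` is `L'(⟪W, I_k^Z⟫) • g_j(h_{j+1}(⋯ h_k(W)))`,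
the backward recursion being encoded by `v` with `v k = W` and `v (m-1) = h_m (v m)`. -/
theorem stmt_15 {k : ℕ}
    (P : Fin (k + 1) → Type) [∀ j, NormedAddCommGroup (P j)]
    [∀ j, InnerProductSpace ℝ (P j)] [∀ j, FiniteDimensional ℝ (P j)]
    (F : Fin (k + 1) → Type) [∀ j, NormedAddCommGroup (F j)]
    [∀ j, InnerProductSpace ℝ (F j)] [∀ j, FiniteDimensional ℝ (F j)]
    (I : (∀ j, P j) → ∀ j, F j)
    (ΔI : (∀ j, P j) → (∀ j, P j) → ∀ j, F j)
    (g : ∀ j, F j →ₗ[ℝ] P j) (h : ∀ j : Fin (k + 1), F j →ₗ[ℝ] F (j - 1))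
    (Z : ∀ j, P j)
    (hΔ0 : ∀ E, ΔI Z E 0 = 0)
    (hΔrec : ∀ E, ∀ j : Fin (k + 1), 1 ≤ (j : ℕ) → ∀ U : F j,
      ⟪ΔI Z E j, U⟫ = ⟪E j, g j U⟫ + ⟪ΔI Z E (j - 1), h j U⟫)
    (hexp : ∀ j : Fin (k + 1),
      (fun E : ∀ j, P j => I (Z + E) j - I Z j - ΔI Z E j) =o[nhds 0]
        fun E : ∀ j, P j => ‖E‖)
    (L : ℝ → ℝ) (hL : Differentiable ℝ L)
    (W : F (Fin.last k)) (j : Fin (k + 1)) (hj : 1 ≤ (j : ℕ))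
    (v : ∀ m, F m) (hvk : v (Fin.last k) = W)
    (hv : ∀ m : Fin (k + 1), j < m → v (m - 1) = h m (v m)) :
    HasGradientAt (fun Zj : P j => L ⟪W, I (Function.update Z j Zj) (Fin.last k)⟫)
      (deriv L ⟪W, I Z (Fin.last k)⟫ • g j (v j)) (Z j) := by
  classical
  -- Lemma A: below j, the perturbation vanishes
  have lemA : ∀ E : ∀ m, P m, (∀ m, m ≠ j → E m = 0) →
      ∀ n : ℕ, ∀ m : Fin (k + 1), (m : ℕ) = n → (m : ℕ) < (j : ℕ) →
      ∀ U : F m, ⟪ΔI Z E m, U⟫ = 0 := by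
    intro E hE n
    induction n with
    | zero =>
      intro m hm _ U
      have hm0 : m = 0 := Fin.ext (by simpa using hm)
      subst hm0
      rw [hΔ0]
      exact inner_zero_left U
    | succ n ih =>
      intro m hm hmj U
      have hm1 : 1 ≤ (m : ℕ) := by omega
      have hne : m ≠ j := ne_of_lt (Fin.lt_def.mpr hmj)
      have hsub : ((m - 1 : Fin (k + 1)) : ℕ) = (m : ℕ) - 1 := by
        rw [Fin.coe_sub_one, if_neg]
        intro h0
        rw [h0] at hm1; simp at hm1
      rw [hΔrec E m hm1 U, hE m hne, inner_zero_left, zero_add,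
        ih (m - 1) (by omega) (by omega)]
  -- Lemma B: above j, the inner product with v m is constant
  have lemB : ∀ E : ∀ m, P m, (∀ m, m ≠ j → E m = 0) →
      ∀ n : ℕ, ∀ m : Fin (k + 1), (m : ℕ) = (j : ℕ) + n →
      ⟪ΔI Z E m, v m⟫ = ⟪E j, g j (v j)⟫ := by
    intro E hE n
    induction n with
    | zero =>
      intro m hm
      have hmj : m = j := Fin.ext (by omega)
      subst hmj
      have hsub : ((m - 1 : Fin (k + 1)) : ℕ) = (m : ℕ) - 1 := by
        rw [Fin.coe_sub_one, if_neg]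
        intro h0
        rw [h0] at hj; simp at hj
      rw [hΔrec E m hj (v m),
        lemA E hE ((m : ℕ) - 1) (m - 1) hsub (by omega) (h m (v m)), add_zero]
    | succ n ih =>
      intro m hm
      have hm1 : 1 ≤ (m : ℕ) := by omega
      have hne : m ≠ j := by
        intro h0; rw [h0] at hm; omega
      have hsub : ((m - 1 : Fin (k + 1)) : ℕ) = (m : ℕ) - 1 := by
        rw [Fin.coe_sub_one, if_neg]
        intro h0
        rw [h0] at hm1; simp at hm1
      have hjm : j < m := Fin.lt_def.mpr (by omega)
      rw [hΔrec E m hm1 (v m), hE m hne, inner_zero_left, zero_add, ← hv m hjm]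
      exact ih (m - 1) (by omega)
  -- consequence at the last index
  have hjk : (j : ℕ) ≤ k := by have := j.isLt; omega
  have hlast : ∀ E : ∀ m, P m, (∀ m, m ≠ j → E m = 0) →
      ⟪W, ΔI Z E (Fin.last k)⟫ = ⟪E j, g j (v j)⟫ := by
    intro E hE
    rw [real_inner_comm, ← hvk]
    exact lemB E hE (k - (j : ℕ)) (Fin.last k) (by simp [Fin.val_last]; omega)
  -- the perturbation map
  set e : P j → (∀ m, P m) := fun Zj => Pi.single j (Zj - Z j) with he
  have hE0 : ∀ Zj : P j, ∀ m, m ≠ j → e Zj m = 0 := by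
    intro Zj m hm
    simp only [he, Pi.single_eq_of_ne hm]
  have hEj : ∀ Zj : P j, e Zj j = Zj - Z j := by
    intro Zj; simp [he]
  have hupdate : ∀ Zj : P j, Function.update Z j Zj = Z + e Zj := by
    intro Zj
    funext m
    by_cases hm : m = j
    · subst hm; simp [he]
    · simp [he, Function.update_of_ne hm, Pi.single_eq_of_ne hm]
  have hsingle : ∀ Zj : P j, ‖e Zj‖ = ‖Zj - Z j‖ := fun Zj => Pi.norm_single _
  -- tendsto of e
  have hte : Filter.Tendsto e (nhds (Z j)) (nhds 0) := by
    rw [tendsto_zero_iff_norm_tendsto_zero]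
    simp only [hsingle]
    have : Filter.Tendsto (fun Zj : P j => Zj - Z j) (nhds (Z j)) (nhds 0) := by
      have := (continuous_id.sub (continuous_const (y := Z j))).tendsto (Z j)
      simpa using (continuous_sub_right (Z j)).tendsto (Z j)
    simpa using this.norm
  -- o-estimate after substituting the perturbation
  have hoA : (fun Zj : P j => I (Z + e Zj) (Fin.last k) - I Z (Fin.last k)
      - ΔI Z (e Zj) (Fin.last k)) =o[nhds (Z j)] fun Zj => ‖Zj - Z j‖ := by
    have h1 := (hexp (Fin.last k)).comp_tendsto hte
    simp only [Function.comp_def] at h1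
    simp only [hsingle] at h1
    exact h1
  have hoB : (fun Zj : P j => ⟪W, I (Z + e Zj) (Fin.last k) - I Z (Fin.last k)
      - ΔI Z (e Zj) (Fin.last k)⟫) =o[nhds (Z j)] fun Zj => ‖Zj - Z j‖ :=
    ((innerSL ℝ W).isBigO_comp _ _).trans_isLittleO hoA
  -- the inner function has the expected Fréchet derivative
  have hG : HasFDerivAt (fun Zj : P j => ⟪W, I (Function.update Z j Zj) (Fin.last k)⟫)
      (InnerProductSpace.toDual ℝ (P j) (g j (v j))) (Z j) := by
    apply HasFDerivAt.of_isLittleO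
    have heq : (fun Zj : P j => ⟪W, I (Function.update Z j Zj) (Fin.last k)⟫
        - ⟪W, I (Function.update Z j (Z j)) (Fin.last k)⟫
        - (InnerProductSpace.toDual ℝ (P j) (g j (v j))) (Zj - Z j))
        = fun Zj : P j => ⟪W, I (Z + e Zj) (Fin.last k) - I Z (Fin.last k)
          - ΔI Z (e Zj) (Fin.last k)⟫ := by
      funext Zj
      rw [hupdate Zj, Function.update_eq_self, inner_sub_right, inner_sub_right]
      have htd : (InnerProductSpace.toDual ℝ (P j) (g j (v j))) (Zj - Z j)
          = ⟪W, ΔI Z (e Zj) (Fin.last k)⟫ := by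
        rw [InnerProductSpace.toDual_apply_apply, hlast (e Zj) (hE0 Zj), hEj Zj]
        exact real_inner_comm _ _
      rw [htd]
    have h3 := hoB.congr_left (fun Zj => (congrFun heq Zj).symm)
    exact Asymptotics.isLittleO_norm_right.mp h3
  -- chain rule with L
  have hL' : HasDerivAt L (deriv L ⟪W, I Z (Fin.last k)⟫) ⟪W, I Z (Fin.last k)⟫ :=
    (hL _).hasDerivAt
  have hc : ⟪W, I (Function.update Z j (Z j)) (Fin.last k)⟫ = ⟪W, I Z (Fin.last k)⟫ := by
    rw [Function.update_eq_self]
  rw [hasGradientAt_iff_hasFDerivAt, map_smul]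
  have hL2 : HasDerivAt L (deriv L ⟪W, I Z (Fin.last k)⟫)
      ⟪W, I (Function.update Z j (Z j)) (Fin.last k)⟫ := by rw [hc]; exact hL'
  exact hL2.comp_hasFDerivAt (Z j) hG
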